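/- For any (x,η) ∈ ΛT*M × ℝ with η > 0 and q := π∘x, one has A_{H−k}(x,η) ≤ S_{L+k}(q,η), with equality if and only if x = (q,q̇) (i.e. p(t) = q̇(t)/η up to the dynamical identification); and A_{H−k}(x⁻,−η) ≥ −S_{L+k}(q,η) with equality iff x = (q,q̇), where x⁻(t) := x(−t). -/

import Mathlib

open MeasureTheory
open scoped RealInnerProductSpace

lemma aux_zero_of_integral_zero {D : ℝ → ℝ} (hc : Continuous D) (hnn : ∀ t, 0 ≤ D t)
    (hper : Function.Periodic D 1) (h0 : ∫ t in (0:ℝ)..1, D t = 0) : ∀ t, D t = 0 := by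
  have hzero : Set.EqOn D 0 (Set.Ioc (0:ℝ) 1) := by
    have hint : IntegrableOn D (Set.Ioc (0:ℝ) 1) :=
      hc.integrableOn_Icc.mono_set Set.Ioc_subset_Icc_self
    have h0' : ∫ t in Set.Ioc (0:ℝ) 1, D t = 0 := by
      rwa [intervalIntegral.integral_of_le (by norm_num : (0:ℝ) ≤ 1)] at h0
    have hae : D =ᵐ[volume.restrict (Set.Ioc (0:ℝ) 1)] 0 :=
      (setIntegral_eq_zero_iff_of_nonneg_ae
        (Filter.Eventually.of_forall fun t => hnn t) hint).mp h0'
    exact Measure.eqOn_Ioc_of_ae_eq volume hae hc.continuousOn continuousOn_const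
  intro t
  have hmem : t - (↑(⌈t⌉ - 1) : ℝ) * 1 ∈ Set.Ioc (0:ℝ) 1 := by
    push_cast
    constructor
    · have := Int.ceil_lt_add_one t
      linarith
    · have := Int.le_ceil t
      linarith
  have := hper.sub_int_mul_eq (x := t) (⌈t⌉ - 1)
  rw [← this]
  exact hzero hmem


/-!
STATEMENT 8: For any `(x,η) ∈ ΛT*M × ℝ` with `η > 0` and `q := π∘x`, one has
`A_{H−k}(x,η) ≤ S_{L+k}(q,η)`, with equality if and only if `x = (q,q̇)` (i.e. `p(t) = q̇(t)/η`
under the dynamical identification), and `A_{H−k}(x⁻,−η) ≥ −S_{L+k}(q,η)` with equality iff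
`x = (q,q̇)`, where `x⁻(t) := x(−t)`.

Phase space model: `T*M ≅ F × F` for a real inner product space `F`; a loop `x = (q,p)` is a
pair of 1-periodic maps; `H(q,p) = ½|p|² + U(q)`, `L(q,v) = ½|v|² − U(q)`;
`A_{H−k}(x,η) = ∫₀¹ (⟪p,q̇⟫ + θ_q(q̇)) dt − η∫₀¹ (H(x)−k) dt` and
`S_{L+k}(q,T) = T∫₀¹ (L(q,q̇/T) + k) dt + ∫₀¹ θ_q(q̇) dt`, with `θ` (denoted `Th`) a primitive
of the weakly exact magnetic form.  The underlying inequality is the Fenchel inequality.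
-/
theorem rabinowitz_action_le_free_time_action
    {F : Type*} [NormedAddCommGroup F] [InnerProductSpace ℝ F]
    (U : F → ℝ) (hU : Continuous U) (Th : F → F →L[ℝ] ℝ) (hTh : Continuous Th) (k : ℝ)
    (q : ℝ → F) (p : ℝ → F) (η : ℝ) (hη : 0 < η)
    (hq : ContDiff ℝ 1 q) (hp : Continuous p)
    (hqper : Function.Periodic q 1) (hpper : Function.Periodic p 1) :
    -- A_{H−k}(x,η) ≤ S_{L+k}(q,η), with equality iff p = q̇/η
    (((∫ t in (0:ℝ)..1, (⟪p t, deriv q t⟫ + Th (q t) (deriv q t)))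
        - η * ∫ t in (0:ℝ)..1, ((1 / 2) * ‖p t‖ ^ 2 + U (q t) - k))
      ≤ η * (∫ t in (0:ℝ)..1, ((1 / 2) * ‖η⁻¹ • deriv q t‖ ^ 2 - U (q t) + k))
        + ∫ t in (0:ℝ)..1, Th (q t) (deriv q t))
    ∧ ((((∫ t in (0:ℝ)..1, (⟪p t, deriv q t⟫ + Th (q t) (deriv q t)))
        - η * ∫ t in (0:ℝ)..1, ((1 / 2) * ‖p t‖ ^ 2 + U (q t) - k))
      = η * (∫ t in (0:ℝ)..1, ((1 / 2) * ‖η⁻¹ • deriv q t‖ ^ 2 - U (q t) + k))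
        + ∫ t in (0:ℝ)..1, Th (q t) (deriv q t))
      ↔ ∀ t, p t = η⁻¹ • deriv q t)
    -- A_{H−k}(x⁻,−η) ≥ −S_{L+k}(q,η), with equality iff p = q̇/η
    ∧ (-(η * (∫ t in (0:ℝ)..1, ((1 / 2) * ‖η⁻¹ • deriv q t‖ ^ 2 - U (q t) + k))
          + ∫ t in (0:ℝ)..1, Th (q t) (deriv q t))
      ≤ (∫ t in (0:ℝ)..1,
            (⟪p (-t), deriv (fun s => q (-s)) t⟫ + Th (q (-t)) (deriv (fun s => q (-s)) t)))
          - (-η) * ∫ t in (0:ℝ)..1, ((1 / 2) * ‖p (-t)‖ ^ 2 + U (q (-t)) - k))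
    ∧ (((∫ t in (0:ℝ)..1,
            (⟪p (-t), deriv (fun s => q (-s)) t⟫ + Th (q (-t)) (deriv (fun s => q (-s)) t)))
          - (-η) * ∫ t in (0:ℝ)..1, ((1 / 2) * ‖p (-t)‖ ^ 2 + U (q (-t)) - k)
        = -(η * (∫ t in (0:ℝ)..1, ((1 / 2) * ‖η⁻¹ • deriv q t‖ ^ 2 - U (q t) + k))
            + ∫ t in (0:ℝ)..1, Th (q t) (deriv q t)))
      ↔ ∀ t, p t = η⁻¹ • deriv q t) := by
  have hη0 : η ≠ 0 := ne_of_gt hη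
  have hqc : Continuous q := hq.continuous
  have hv : Continuous (deriv q) := hq.continuous_deriv le_rfl
  have hvper : Function.Periodic (deriv q) 1 := by
    intro t
    rw [← deriv_comp_add_const, show (fun s => q (s + 1)) = q from funext hqper]
  -- continuity of the various integrands
  have hI1c : Continuous fun t => ⟪p t, deriv q t⟫ := hp.inner hv
  have hIThc : Continuous fun t => (Th (q t)) (deriv q t) :=
    (hTh.comp hq.continuous).clm_apply hv
  have hIHc : Continuous fun t => (1 / 2) * ‖p t‖ ^ 2 + U (q t) - k := by fun_prop
  have hILc : Continuous fun t => (1 / 2) * ‖η⁻¹ • deriv q t‖ ^ 2 - U (q t) + k := by fun_prop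
  have hDc : Continuous fun t => (η / 2) * ‖p t - η⁻¹ • deriv q t‖ ^ 2 := by fun_prop
  -- split the first integral
  have hsplit : (∫ t in (0:ℝ)..1, (⟪p t, deriv q t⟫ + Th (q t) (deriv q t)))
      = (∫ t in (0:ℝ)..1, ⟪p t, deriv q t⟫) + ∫ t in (0:ℝ)..1, Th (q t) (deriv q t) :=
    intervalIntegral.integral_add (hI1c.intervalIntegrable 0 1) (hIThc.intervalIntegrable 0 1)
  -- the key algebraic identity
  have hkey : η * (∫ t in (0:ℝ)..1, ((1 / 2) * ‖η⁻¹ • deriv q t‖ ^ 2 - U (q t) + k))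
      + η * (∫ t in (0:ℝ)..1, ((1 / 2) * ‖p t‖ ^ 2 + U (q t) - k))
      - (∫ t in (0:ℝ)..1, ⟪p t, deriv q t⟫)
      = ∫ t in (0:ℝ)..1, (η / 2) * ‖p t - η⁻¹ • deriv q t‖ ^ 2 := by
    rw [← intervalIntegral.integral_const_mul, ← intervalIntegral.integral_const_mul,
      ← intervalIntegral.integral_add ((show Continuous fun t => η * ((1 / 2) * ‖η⁻¹ • deriv q t‖ ^ 2 - U (q t) + k) from continuous_const.mul hILc).intervalIntegrable 0 1)
        ((show Continuous fun t => η * ((1 / 2) * ‖p t‖ ^ 2 + U (q t) - k) from continuous_const.mul hIHc).intervalIntegrable 0 1),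
      ← intervalIntegral.integral_sub
        ((show Continuous fun t => η * ((1 / 2) * ‖η⁻¹ • deriv q t‖ ^ 2 - U (q t) + k) + η * ((1 / 2) * ‖p t‖ ^ 2 + U (q t) - k) from (continuous_const.mul hILc).add (continuous_const.mul hIHc)).intervalIntegrable 0 1)
        (hI1c.intervalIntegrable 0 1)]
    apply intervalIntegral.integral_congr
    intro t _
    dsimp only
    have hns := norm_sub_sq_real (p t) (η⁻¹ • deriv q t)
    have hin : ⟪p t, η⁻¹ • deriv q t⟫ = η⁻¹ * ⟪p t, deriv q t⟫ :=
      real_inner_smul_right _ _ _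
    rw [hns, hin]
    field_simp
    ring
  -- nonnegativity of the defect
  have hDnn : 0 ≤ ∫ t in (0:ℝ)..1, (η / 2) * ‖p t - η⁻¹ • deriv q t‖ ^ 2 :=
    intervalIntegral.integral_nonneg (by norm_num) (fun t _ => by positivity)
  -- equality characterisation
  have hDiff : (∫ t in (0:ℝ)..1, (η / 2) * ‖p t - η⁻¹ • deriv q t‖ ^ 2) = 0
      ↔ ∀ t, p t = η⁻¹ • deriv q t := by
    constructor
    · intro h0 t
      have hDper : Function.Periodic (fun t => (η / 2) * ‖p t - η⁻¹ • deriv q t‖ ^ 2) 1 := by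
        intro s
        simp only [hpper s, hvper s]
      have hz := aux_zero_of_integral_zero hDc (fun s => by positivity) hDper h0 t
      have : ‖p t - η⁻¹ • deriv q t‖ ^ 2 = 0 := by
        rcases mul_eq_zero.mp hz with h | h
        · exact absurd h (by positivity)
        · exact h
      have : ‖p t - η⁻¹ • deriv q t‖ = 0 := by
        nlinarith [norm_nonneg (p t - η⁻¹ • deriv q t)]
      have := norm_eq_zero.mp this
      have := sub_eq_zero.mp this
      exact this
    · intro h
      have : Set.EqOn (fun t => (η / 2) * ‖p t - η⁻¹ • deriv q t‖ ^ 2) (fun _ => (0:ℝ))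
          (Set.uIcc (0:ℝ) 1) := by
        intro t _
        simp [h t]
      rw [intervalIntegral.integral_congr this, intervalIntegral.integral_const]
      simp
  -- the reversed-loop integral identities
  have hrevG : (∫ t in (0:ℝ)..1,
        (⟪p (-t), deriv (fun s => q (-s)) t⟫ + Th (q (-t)) (deriv (fun s => q (-s)) t)))
      = -((∫ t in (0:ℝ)..1, ⟪p t, deriv q t⟫) + ∫ t in (0:ℝ)..1, Th (q t) (deriv q t)) := by
    have hfun : (fun t => ⟪p (-t), deriv (fun s => q (-s)) t⟫
          + Th (q (-t)) (deriv (fun s => q (-s)) t))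
        = fun t => (fun s => -(⟪p s, deriv q s⟫ + Th (q s) (deriv q s))) (-t) := by
      funext t
      rw [deriv_comp_neg]
      simp only [inner_neg_right, map_neg]
      ring
    rw [hfun, intervalIntegral.integral_comp_neg
      (fun s => -(⟪p s, deriv q s⟫ + Th (q s) (deriv q s)))]
    have hper : Function.Periodic (fun s => -(⟪p s, deriv q s⟫ + Th (q s) (deriv q s))) 1 := by
      intro s
      simp only [hpper s, hvper s, hqper s]
    have h2 := hper.intervalIntegral_add_eq (-1) 0
    rw [show (-1:ℝ) + 1 = 0 by norm_num, zero_add] at h2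
    simp only [neg_zero, neg_neg]
    rw [h2, intervalIntegral.integral_neg, hsplit]
  have hrevH : (∫ t in (0:ℝ)..1, ((1 / 2) * ‖p (-t)‖ ^ 2 + U (q (-t)) - k))
      = ∫ t in (0:ℝ)..1, ((1 / 2) * ‖p t‖ ^ 2 + U (q t) - k) := by
    rw [intervalIntegral.integral_comp_neg (fun s => (1 / 2) * ‖p s‖ ^ 2 + U (q s) - k)]
    have hper : Function.Periodic (fun s => (1 / 2) * ‖p s‖ ^ 2 + U (q s) - k) 1 := by
      intro s
      simp only [hpper s, hqper s]
    have h2 := hper.intervalIntegral_add_eq (-1) 0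
    rw [show (-1:ℝ) + 1 = 0 by norm_num, zero_add] at h2
    simp only [neg_zero, neg_neg]
    rw [h2]
  refine ⟨by rw [hsplit]; linarith, ⟨?_, ?_⟩, by rw [hrevG, hrevH]; linarith, ⟨?_, ?_⟩⟩
  · intro h
    rw [hsplit] at h
    exact hDiff.mp (by linarith)
  · intro h
    have h0 := hDiff.mpr h
    rw [hsplit]
    linarith
  · intro h
    rw [hrevG, hrevH] at h
    exact hDiff.mp (by linarith)
  · intro h
    have h0 := hDiff.mpr h
    rw [hrevG, hrevH]
    linarith
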